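/- Let p be a prime, G a finite group, ℤ_(p) the localization of the integers at the prime ideal (p), R = ℤ_(p)[G] the group algebra of G over ℤ_(p), and R̄ = 𝔽_p[G] the group algebra of G over the field with p elements. Let M be a finitely generated R-module such that multiplication by p on M is injective and such that the quotient module M/pM is projective as an R̄-module. Then M is a projective R-module. -/

import Mathlib

/-- The ideal `(p) ⊆ ℤ` is prime, for `p` a prime number. -/
instance stmt9_span_p_isPrime (p : ℕ) [Fact p.Prime] :
    (Ideal.span {(p : ℤ)}).IsPrime := by
  rw [Ideal.span_singleton_prime (by exact_mod_cast (Fact.out : p.Prime).ne_zero)]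
  exact Nat.prime_iff_prime_int.mp Fact.out

open Function LinearMap Submodule

private theorem stmt9_core {A S Sb : Type*} [CommRing A] [IsNoetherianRing A]
    [Ring S] [Ring Sb] [Algebra A S] [Module.Finite A S]
    {φ : S →+* Sb} {t0 : A} (htJ : t0 ∈ (⊥ : Ideal A).jacobson)
    (hφt : φ (algebraMap A S t0) = 0)
    (hφsurj : Function.Surjective φ)
    (hφker : ∀ s : S, φ s = 0 → ∃ s', s = algebraMap A S t0 * s')
    {M : Type*} [AddCommGroup M] [Module S M] [Module.Finite S M]
    (hpM : Function.Injective fun m : M => algebraMap A S t0 • m)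
    {Mbar : Type*} [AddCommGroup Mbar] [Module Sb Mbar]
    (q : M →ₛₗ[φ] Mbar) (hqsurj : Function.Surjective q)
    (hker : ∀ m : M, q m = 0 ↔ ∃ m' : M, m = algebraMap A S t0 • m')
    (hproj : Module.Projective Sb Mbar) :
    Module.Projective S M := by
  classical
  set t : S := algebraMap A S t0 with ht
  haveI : IsNoetherianRing S := isNoetherianRing_iff.mpr <|
    isNoetherian_of_tower A (inferInstance : IsNoetherian A S)
  obtain ⟨n, π, hπ⟩ := Module.Finite.exists_fin' S M
  let Φ : (Fin n → S) →ₛₗ[φ] (Fin n → Sb) :=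
    { toFun := fun x i => φ (x i)
      map_add' := fun x y => funext fun i => by simp
      map_smul' := fun r x => funext fun i => by simp [smul_eq_mul] }
  have hΦsurj : Function.Surjective Φ := fun y =>
    ⟨fun i => Classical.choose (hφsurj (y i)),
      funext fun i => Classical.choose_spec (hφsurj (y i))⟩
  let b := Pi.basisFun S (Fin n)
  let bb := Pi.basisFun Sb (Fin n)
  have hΦb : ∀ i, Φ (b i) = bb i := by
    intro i
    funext j
    simp only [Φ, LinearMap.coe_mk, AddHom.coe_mk, b, bb, Pi.basisFun_apply]
    by_cases h : j = i <;> simp [Pi.single_apply, h]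
  let πb : (Fin n → Sb) →ₗ[Sb] Mbar := bb.constr ℕ fun i => q (π (b i))
  have hA : πb.comp Φ = (q.comp π : (Fin n → S) →ₛₗ[φ] Mbar) := by
    apply b.ext
    intro i
    simp only [LinearMap.comp_apply, hΦb i]
    rw [show πb (bb i) = q (π (b i)) from bb.constr_basis ℕ _ i]
  have hA' : ∀ x : Fin n → S, πb (Φ x) = q (π x) := fun x => DFunLike.congr_fun hA x
  have hπbsurj : Function.Surjective πb := by
    intro mb
    obtain ⟨m, rfl⟩ := hqsurj mb
    obtain ⟨x, rfl⟩ := hπ m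
    exact ⟨Φ x, hA' x⟩
  haveI := hproj
  obtain ⟨sb, hsb⟩ := Module.projective_lifting_property πb LinearMap.id hπbsurj
  have hsb' : ∀ y, πb (sb y) = y := fun y => DFunLike.congr_fun hsb y
  -- lifting elements of ker πb to ker π
  have hC : ∀ y : Fin n → Sb, πb y = 0 → ∃ k : Fin n → S, π k = 0 ∧ Φ k = y := by
    intro y hy
    obtain ⟨x, rfl⟩ := hΦsurj y
    have hq0 : q (π x) = 0 := by rw [← hA' x, hy]
    obtain ⟨m', hm'⟩ := (hker _).1 hq0
    obtain ⟨x', hx'⟩ := hπ m'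
    refine ⟨x - t • x', ?_, ?_⟩
    · rw [map_sub, map_smul, hx', ← hm', sub_self]
    · rw [map_sub, LinearMap.map_smulₛₗ, hφt, zero_smul, sub_zero]
  have hyi : ∀ i, πb (bb i - sb (πb (bb i))) = 0 := fun i => by
    rw [map_sub, hsb', sub_self]
  let c : Fin n → LinearMap.ker π := fun i =>
    ⟨Classical.choose (hC _ (hyi i)),
      LinearMap.mem_ker.2 (Classical.choose_spec (hC _ (hyi i))).1⟩
  have hc : ∀ i, Φ (c i : Fin n → S) = bb i - sb (πb (bb i)) := fun i =>
    (Classical.choose_spec (hC _ (hyi i))).2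
  let σ : (Fin n → S) →ₗ[S] LinearMap.ker π := b.constr ℕ c
  have hσb : ∀ i, σ (b i) = c i := fun i => b.constr_basis ℕ c i
  have hE : Φ.comp ((LinearMap.ker π).subtype.comp σ)
      = (LinearMap.id - sb.comp πb).comp Φ := by
    apply b.ext
    intro i
    simp only [LinearMap.comp_apply, Submodule.subtype_apply, hσb i, hΦb i,
      LinearMap.sub_apply, LinearMap.id_apply]
    exact hc i
  have hE' : ∀ x : Fin n → S, Φ ((σ x : LinearMap.ker π) : Fin n → S)
      = Φ x - sb (πb (Φ x)) := by
    intro x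
    have h := DFunLike.congr_fun hE x
    simpa using h
  let τ : LinearMap.ker π →ₗ[S] LinearMap.ker π := σ.comp (LinearMap.ker π).subtype
  have hτ : ∀ k : LinearMap.ker π, ∃ w : LinearMap.ker π, k = τ k + t • w := by
    intro k
    have hk0 : π (k : Fin n → S) = 0 := k.2
    have h1 : πb (Φ (k : Fin n → S)) = 0 := by rw [hA', hk0, map_zero]
    have h2 : Φ ((τ k : LinearMap.ker π) : Fin n → S) = Φ (k : Fin n → S) := by
      have : ((τ k : LinearMap.ker π) : Fin n → S)
          = ((σ (k : Fin n → S) : LinearMap.ker π) : Fin n → S) := rfl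
      rw [this, hE' (k : Fin n → S), h1, map_zero, sub_zero]
    have h3 : ∀ i, φ ((((τ k : LinearMap.ker π) : Fin n → S) - (k : Fin n → S)) i) = 0 := by
      intro i
      have hz : Φ (((τ k : LinearMap.ker π) : Fin n → S) - (k : Fin n → S)) = 0 := by
        rw [map_sub, h2, sub_self]
      exact congrFun hz i
    have hw0 : ∃ w0 : Fin n → S,
        ((τ k : LinearMap.ker π) : Fin n → S) - (k : Fin n → S) = t • w0 := by
      refine ⟨fun i => Classical.choose (hφker _ (h3 i)), funext fun i => ?_⟩
      rw [Pi.smul_apply, smul_eq_mul]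
      exact Classical.choose_spec (hφker _ (h3 i))
    obtain ⟨w0, hw0⟩ := hw0
    have hw0K : π w0 = 0 := by
      have h4 : t • π w0 = 0 := by
        rw [← map_smul, ← hw0, map_sub, hk0, sub_zero]
        exact (τ k).2
      have := hpM (a₁ := π w0) (a₂ := 0) (by simpa using h4)
      exact this
    refine ⟨-⟨w0, LinearMap.mem_ker.2 hw0K⟩, ?_⟩
    apply Subtype.ext
    push_cast
    rw [smul_neg]
    rw [show t • w0 = ((τ k : LinearMap.ker π) : Fin n → S) - (k : Fin n → S) from hw0.symm]
    abel
  haveI : Module.Finite S (LinearMap.ker π) :=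
    Module.Finite.iff_fg.2 (IsNoetherian.noetherian _)
  haveI : IsNoetherian A (Fin n → S) := inferInstance
  haveI : IsNoetherian A (LinearMap.ker π) :=
    isNoetherian_of_injective ((LinearMap.ker π).subtype.restrictScalars A)
      (Submodule.injective_subtype _)
  have hτsurj : Function.Surjective τ := by
    have hle : (⊤ : Submodule A (LinearMap.ker π)) ≤
        LinearMap.range (τ.restrictScalars A) := by
      refine Submodule.le_of_le_smul_of_le_jacobson_bot (I := Ideal.span {t0})
        (IsNoetherian.noetherian _)
        (Ideal.span_le.mpr (Set.singleton_subset_iff.mpr htJ)) ?_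
      intro k _
      obtain ⟨w, hw⟩ := hτ k
      have hw' : k = τ.restrictScalars A k + t0 • w := by
        rw [← algebraMap_smul S t0 w, ← ht]
        exact hw
      rw [hw']
      exact Submodule.add_mem_sup (LinearMap.mem_range_self _ k)
        (Submodule.smul_mem_smul (Ideal.subset_span rfl) trivial)
    intro k
    obtain ⟨w, hw⟩ := hle (Submodule.mem_top (x := k))
    exact ⟨w, hw⟩
  have hτinj : Function.Injective τ :=
    OrzechProperty.injective_of_surjective_endomorphism τ hτsurj
  let e : LinearMap.ker π ≃ₗ[S] LinearMap.ker π := LinearEquiv.ofBijective τ ⟨hτinj, hτsurj⟩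
  let r : (Fin n → S) →ₗ[S] LinearMap.ker π := e.symm.toLinearMap.comp σ
  have hr : ∀ k : LinearMap.ker π, r (k : Fin n → S) = k := by
    intro k
    have h1 : σ (k : Fin n → S) = e k := rfl
    simp only [r, LinearMap.comp_apply, LinearEquiv.coe_coe, h1, e.symm_apply_apply]
  let g : (Fin n → S) →ₗ[S] (Fin n → S) :=
    LinearMap.id - (LinearMap.ker π).subtype.comp r
  have hg : LinearMap.ker π ≤ LinearMap.ker g := by
    intro x hx
    have h1 : r x = ⟨x, hx⟩ := hr ⟨x, hx⟩
    simp only [g, LinearMap.mem_ker, LinearMap.sub_apply, LinearMap.id_apply,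
      LinearMap.comp_apply, Submodule.subtype_apply, h1, sub_self]
  let eq1 := π.quotKerEquivOfSurjective hπ
  let sM : M →ₗ[S] (Fin n → S) :=
    ((LinearMap.ker π).liftQ g hg).comp eq1.symm.toLinearMap
  have hsM : π.comp sM = LinearMap.id := by
    ext m
    obtain ⟨x, rfl⟩ := hπ m
    have h1 : eq1 (Submodule.Quotient.mk x) = π x := rfl
    simp only [LinearMap.comp_apply, LinearMap.id_apply, sM, LinearEquiv.coe_coe]
    rw [← h1, LinearEquiv.symm_apply_apply, Submodule.liftQ_apply]
    have h2 : π ((r x : LinearMap.ker π) : Fin n → S) = 0 := (r x).2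
    simp only [g, LinearMap.sub_apply, LinearMap.id_apply, LinearMap.comp_apply,
      Submodule.subtype_apply, map_sub, h2, sub_zero]
    exact h1.symm
  exact Module.Projective.of_split sM π hsM

section glue
variable (p : ℕ) [Fact p.Prime]

local notation "Zp" => Localization.AtPrime (Ideal.span {(p : ℤ)})

private theorem stmt9_fdiv (f : Zp →+* ZMod p) (x : Zp) (hx : f x = 0) :
    ∃ y : Zp, x = (p : Zp) * y := by
  obtain ⟨⟨a, s⟩, h⟩ := IsLocalization.surj (M := (Ideal.span {(p : ℤ)}).primeCompl) x
  have hfa : f (algebraMap ℤ Zp a) = 0 := by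
    rw [← h, map_mul, hx, zero_mul]
  have hA : ((a : ℤ) : ZMod p) = 0 := by
    have h2 := eq_intCast (f.comp (algebraMap ℤ Zp)) a
    rw [RingHom.comp_apply, hfa] at h2
    exact h2.symm
  obtain ⟨b, hb⟩ := (ZMod.intCast_zmod_eq_zero_iff_dvd a p).1 hA
  obtain ⟨u, hu⟩ := IsLocalization.map_units (M := (Ideal.span {(p : ℤ)}).primeCompl) Zp s
  have hx1 : x = algebraMap ℤ Zp a * ↑u⁻¹ := by
    rw [Units.eq_mul_inv_iff_mul_eq, hu, h]
  refine ⟨algebraMap ℤ Zp b * ↑u⁻¹, ?_⟩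
  rw [hx1, hb, map_mul]
  have : algebraMap ℤ Zp ((p : ℕ) : ℤ) = ((p : ℕ) : Zp) := map_natCast _ p
  rw [this, mul_assoc]

private theorem stmt9_p_mem_max : ((p : ℕ) : Zp) ∈ IsLocalRing.maximalIdeal Zp := by
  have h1 : algebraMap ℤ Zp ((p : ℕ) : ℤ) ∈ IsLocalRing.maximalIdeal Zp := by
    rw [IsLocalization.AtPrime.to_map_mem_maximal_iff Zp (Ideal.span {(p : ℤ)})]
    exact Ideal.subset_span rfl
  rwa [map_natCast] at h1

variable (G : Type*) [Group G] [Finite G]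

private theorem stmt9_finite : Module.Finite Zp (MonoidAlgebra Zp G) :=
  Module.Finite.equiv (MonoidAlgebra.coeffLinearEquiv Zp).symm

variable {G}

private theorem stmt9_coeff (φ : MonoidAlgebra Zp G →+* MonoidAlgebra (ZMod p) G)
    (f : Zp →+* ZMod p)
    (hφ : ∀ (g : G) (x : Zp), φ (MonoidAlgebra.single g x) = MonoidAlgebra.single g (f x))
    (r : MonoidAlgebra Zp G) (g : G) : (φ r).coeff g = f (r.coeff g) := by
  refine MonoidAlgebra.induction_linear (motive := fun r => (φ r).coeff g = f (r.coeff g)) r ?_ ?_ ?_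
  · rw [map_zero, MonoidAlgebra.coeff_zero, MonoidAlgebra.coeff_zero, Finsupp.zero_apply,
      Finsupp.zero_apply, map_zero]
  · intro a b ha hb
    rw [map_add, MonoidAlgebra.coeff_add, Finsupp.add_apply, ha, hb, MonoidAlgebra.coeff_add,
      Finsupp.add_apply, map_add]
  · intro g0 x
    rw [hφ g0 x, MonoidAlgebra.coeff_single, MonoidAlgebra.coeff_single]
    by_cases h : g0 = g
    · subst h
      rw [Finsupp.single_eq_same, Finsupp.single_eq_same]
    · simp [Finsupp.single_apply, h]

private theorem stmt9_phisurj (φ : MonoidAlgebra Zp G →+* MonoidAlgebra (ZMod p) G)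
    (f : Zp →+* ZMod p)
    (hφ : ∀ (g : G) (x : Zp), φ (MonoidAlgebra.single g x) = MonoidAlgebra.single g (f x)) :
    Function.Surjective φ := by
  have hfsurj : Function.Surjective f := by
    intro a
    obtain ⟨m, rfl⟩ := ZMod.intCast_surjective a
    exact ⟨((m : ℤ) : Zp), map_intCast f m⟩
  intro y
  refine MonoidAlgebra.induction_linear (motive := fun y => ∃ x, φ x = y) y ?_ ?_ ?_
  · exact ⟨0, map_zero φ⟩
  · rintro a b ⟨x, hx⟩ ⟨z, hz⟩
    exact ⟨x + z, by rw [map_add, hx, hz]⟩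
  · intro g a
    obtain ⟨x, hx⟩ := hfsurj a
    exact ⟨MonoidAlgebra.single g x, by rw [hφ, hx]⟩

private theorem stmt9_phiker (φ : MonoidAlgebra Zp G →+* MonoidAlgebra (ZMod p) G)
    (f : Zp →+* ZMod p)
    (hφ : ∀ (g : G) (x : Zp), φ (MonoidAlgebra.single g x) = MonoidAlgebra.single g (f x))
    (s : MonoidAlgebra Zp G) (hs : φ s = 0) :
    ∃ s', s = algebraMap Zp (MonoidAlgebra Zp G) ((p : ℕ) : Zp) * s' := by
  classical
  have h0 : ∀ g : G, f (s.coeff g) = 0 := by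
    intro g
    rw [← stmt9_coeff p φ f hφ, hs]
    rfl
  have hdiv : ∀ g : G, ∃ y : Zp, s.coeff g = (p : Zp) * y :=
    fun g => stmt9_fdiv p f (s.coeff g) (h0 g)
  let v : G → Zp := fun g => if h : s.coeff g = 0 then 0 else Classical.choose (hdiv g)
  have hvsupp : ∀ g, v g ≠ 0 → g ∈ s.coeff.support := by
    intro g hg
    by_contra hns
    rw [Finsupp.notMem_support_iff] at hns
    simp [v, hns] at hg
  let s' : MonoidAlgebra Zp G := MonoidAlgebra.ofCoeff (Finsupp.onFinset s.coeff.support v hvsupp)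
  have key : s = ((p : ℕ) : Zp) • s' := by
    apply MonoidAlgebra.coeff_injective
    ext g
    rw [MonoidAlgebra.coeff_smul, Finsupp.smul_apply, smul_eq_mul]
    show s.coeff g = ((p : ℕ) : Zp) * v g
    by_cases h : s.coeff g = 0
    · simp [v, h]
    · simp only [v, dif_neg h]
      exact Classical.choose_spec (hdiv g)
  exact ⟨s', by rw [← Algebra.smul_def]; exact key⟩


end glue

set_option maxHeartbeats 1000000 in
/-- Let `R = ℤ_(p)[G]` and `R̄ = 𝔽_p[G]` for a finite group `G`.
If `M` is a finitely generated `R`-module on which multiplication by `p` is injective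
and whose reduction `M/pM` (formalized as a surjection `q : M → Mbar` onto an
`R̄`-module, compatible with the coefficient-reduction ring map `φ : R → R̄` and with
kernel `pM`) is projective over `R̄`, then `M` is projective over `R`. -/
theorem stmt9 (p : ℕ) [Fact p.Prime] (G : Type*) [Group G] [Finite G]
    (M : Type*) [AddCommGroup M]
    [Module (MonoidAlgebra (Localization.AtPrime (Ideal.span {(p : ℤ)})) G) M]
    [Module.Finite (MonoidAlgebra (Localization.AtPrime (Ideal.span {(p : ℤ)})) G) M]
    (hpM : Function.Injective fun m : M => p • m)
    (Mbar : Type*) [AddCommGroup Mbar] [Module (MonoidAlgebra (ZMod p) G) Mbar]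
    (φ : MonoidAlgebra (Localization.AtPrime (Ideal.span {(p : ℤ)})) G →+*
         MonoidAlgebra (ZMod p) G)
    (f : Localization.AtPrime (Ideal.span {(p : ℤ)}) →+* ZMod p)
    (hφ : ∀ (g : G) (x : Localization.AtPrime (Ideal.span {(p : ℤ)})),
      φ (MonoidAlgebra.single g x) = MonoidAlgebra.single g (f x))
    (q : M →+ Mbar) (hqsurj : Function.Surjective q)
    (hqcomp : ∀ (r : MonoidAlgebra (Localization.AtPrime (Ideal.span {(p : ℤ)})) G)
      (m : M), q (r • m) = φ r • q m)
    (hker : ∀ m : M, q m = 0 ↔ ∃ m' : M, m = p • m')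
    (hproj : Module.Projective (MonoidAlgebra (ZMod p) G) Mbar) :
    Module.Projective (MonoidAlgebra (Localization.AtPrime (Ideal.span {(p : ℤ)})) G) M := by
  classical
  haveI : IsNoetherianRing (Localization.AtPrime (Ideal.span {(p : ℤ)})) :=
    IsLocalization.isNoetherianRing (Ideal.span {(p : ℤ)}).primeCompl _ inferInstance
  haveI := stmt9_finite p G
  have htJ : ((p : ℕ) : Localization.AtPrime (Ideal.span {(p : ℤ)})) ∈
      (⊥ : Ideal (Localization.AtPrime (Ideal.span {(p : ℤ)}))).jacobson := by
    rw [IsLocalRing.jacobson_eq_maximalIdeal (⊥ : Ideal _) bot_ne_top]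
    exact stmt9_p_mem_max p
  have halg : algebraMap (Localization.AtPrime (Ideal.span {(p : ℤ)}))
        (MonoidAlgebra (Localization.AtPrime (Ideal.span {(p : ℤ)})) G)
        ((p : ℕ) : Localization.AtPrime (Ideal.span {(p : ℤ)}))
      = ((p : ℕ) : MonoidAlgebra (Localization.AtPrime (Ideal.span {(p : ℤ)})) G) :=
    map_natCast _ p
  have hφt : φ (algebraMap (Localization.AtPrime (Ideal.span {(p : ℤ)}))
      (MonoidAlgebra (Localization.AtPrime (Ideal.span {(p : ℤ)})) G)
      ((p : ℕ) : Localization.AtPrime (Ideal.span {(p : ℤ)}))) = 0 := by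
    rw [halg, map_natCast φ p,
      ← map_natCast (algebraMap (ZMod p) (MonoidAlgebra (ZMod p) G)) p,
      ZMod.natCast_self, map_zero]
  let qsl : M →ₛₗ[φ] Mbar := { toFun := q, map_add' := q.map_add, map_smul' := hqcomp }
  have hsm : ∀ m : M, algebraMap (Localization.AtPrime (Ideal.span {(p : ℤ)}))
      (MonoidAlgebra (Localization.AtPrime (Ideal.span {(p : ℤ)})) G)
      ((p : ℕ) : Localization.AtPrime (Ideal.span {(p : ℤ)})) • m = p • m := fun m => by
    rw [halg, Nat.cast_smul_eq_nsmul]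
  refine stmt9_core htJ hφt (stmt9_phisurj p φ f hφ)
    (fun s hs => stmt9_phiker p φ f hφ s hs) ?_ qsl hqsurj ?_ hproj
  · have heq : (fun m : M => algebraMap (Localization.AtPrime (Ideal.span {(p : ℤ)}))
        (MonoidAlgebra (Localization.AtPrime (Ideal.span {(p : ℤ)})) G)
        ((p : ℕ) : Localization.AtPrime (Ideal.span {(p : ℤ)})) • m)
        = fun m : M => p • m := funext hsm
    rw [heq]
    exact hpM
  · intro m
    exact (hker m).trans (exists_congr fun m' => by rw [hsm])
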